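/- Let b, r, t ∈ ℝ with r ≠ 0 and b² = (3 + t) r, and let D be the Type B connection on U = {(x¹,x²) ∈ ℝ² : x¹ > 0} with Christoffel symbols Γ¹_{11} = t/x¹, Γ¹_{12} = Γ¹_{21} = b/x¹, Γ¹_{22} = r/x¹, Γ²_{11} = (−b³/r² − b/r)/x¹, Γ²_{12} = Γ²_{21} = ½(t − 1 − 3b²/r)/x¹, Γ²_{22} = −b/x¹. Then the symmetrized Ricci tensor of D is ρ^{sym}_{11} = −(2/(x¹)²) b²/r, ρ^{sym}_{12} = ρ^{sym}_{21} = −(2/(x¹)²) b, ρ^{sym}_{22} = −(2/(x¹)²) r. -/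

import Mathlib

noncomputable section

/-- Points of the affine surface (local coordinates `(x¹,x²)`). -/
abbrev Pt2 := Fin 2 → ℝ

/-- Partial derivative `∂_{x^i}`. -/
def pd2 (i : Fin 2) (f : Pt2 → ℝ) (p : Pt2) : ℝ :=
  fderiv ℝ f p (Pi.single i 1)

/-- The Ricci tensor `ρ_{ij}` of the affine connection with Christoffel symbols `Γ^k_{ij}`:
`ρ_{ij} = Σ_k ∂_{x^k}Γ^k_{ij} − ∂_{x^i}(Σ_k Γ^k_{kj}) + Σ_{k,l}(Γ^k_{kl}Γ^l_{ij} − Γ^k_{il}Γ^l_{kj})`. -/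
def ricciD (Γ : Fin 2 → Fin 2 → Fin 2 → Pt2 → ℝ) (i j : Fin 2) (p : Pt2) : ℝ :=
  (∑ k : Fin 2, pd2 k (Γ k i j) p) - pd2 i (fun q => ∑ k : Fin 2, Γ k k j q) p
    + ∑ k : Fin 2, ∑ l : Fin 2, (Γ k k l p * Γ l i j p - Γ k i l p * Γ l k j p)

/-- The symmetric part `ρ^{sym}_{ij} = ½(ρ_{ij}+ρ_{ji})` of the Ricci tensor. -/
def ricciDSym (Γ : Fin 2 → Fin 2 → Fin 2 → Pt2 → ℝ) (i j : Fin 2) (p : Pt2) : ℝ :=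
  (ricciD Γ i j p + ricciD Γ j i p) / 2

/-- The affine Hessian `Hes_h(∂_i,∂_j) = ∂_i∂_j h − Σ_k Γ^k_{ij} ∂_k h`. -/
def hessD (Γ : Fin 2 → Fin 2 → Fin 2 → Pt2 → ℝ) (h : Pt2 → ℝ) (i j : Fin 2) (p : Pt2) : ℝ :=
  pd2 i (pd2 j h) p - ∑ k : Fin 2, Γ k i j p * pd2 k h p

/-- The covariant derivative of the Ricci tensor:
`(D_{∂_i}ρ)_{jk} = ∂_i ρ_{jk} − Σ_l Γ^l_{ij} ρ_{lk} − Σ_l Γ^l_{ik} ρ_{jl}`. -/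
def covRicciD (Γ : Fin 2 → Fin 2 → Fin 2 → Pt2 → ℝ) (i j k : Fin 2) (p : Pt2) : ℝ :=
  pd2 i (fun q => ricciD Γ j k q) p - (∑ l : Fin 2, Γ l i j p * ricciD Γ l k p)
    - ∑ l : Fin 2, Γ l i k p * ricciD Γ j l p

/-- The projectively flat Type B connection of class (ii):
`Γ¹_{11} = t/x¹`, `Γ¹_{12} = Γ¹_{21} = b/x¹`, `Γ¹_{22} = r/x¹`,
`Γ²_{11} = (−b³/r² − b/r)/x¹`, `Γ²_{12} = Γ²_{21} = ½(t − 1 − 3b²/r)/x¹`,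
`Γ²_{22} = −b/x¹`. -/
def ΓB2 (b r t : ℝ) : Fin 2 → Fin 2 → Fin 2 → Pt2 → ℝ := fun k i j x =>
  if k = 0 ∧ i = 0 ∧ j = 0 then t / x 0
  else if k = 0 ∧ ((i = 0 ∧ j = 1) ∨ (i = 1 ∧ j = 0)) then b / x 0
  else if k = 0 ∧ i = 1 ∧ j = 1 then r / x 0
  else if k = 1 ∧ i = 0 ∧ j = 0 then (-(b ^ 3 / r ^ 2) - b / r) / x 0
  else if k = 1 ∧ ((i = 0 ∧ j = 1) ∨ (i = 1 ∧ j = 0)) then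
    (1 / 2) * (t - 1 - 3 * b ^ 2 / r) / x 0
  else if k = 1 ∧ i = 1 ∧ j = 1 then -b / x 0
  else 0

lemma pd2_cdiv (c : ℝ) (i : Fin 2) (p : Pt2) (hp : p 0 ≠ 0) :
    pd2 i (fun q => c / q 0) p = if i = 0 then -c / p 0 ^ 2 else 0 := by
  have h0 : HasFDerivAt (fun q : Pt2 => q 0)
      (ContinuousLinearMap.proj (R := ℝ) (φ := fun _ : Fin 2 => ℝ) 0) p :=
    (ContinuousLinearMap.proj (R := ℝ) (φ := fun _ : Fin 2 => ℝ) 0).hasFDerivAt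
  have hinv : HasDerivAt (fun y : ℝ => y⁻¹) (-(p 0 ^ 2)⁻¹) (p 0) := hasDerivAt_inv hp
  have h1 := (hinv.comp_hasFDerivAt p h0).const_mul c
  simp only [Function.comp] at h1
  have heq : (fun q : Pt2 => c / q 0) = fun q => c * (q 0)⁻¹ := by
    funext q; rw [div_eq_mul_inv]
  rw [pd2, heq, h1.fderiv]
  fin_cases i <;> simp [Pi.single_apply] <;> field_simp

lemma ricciD_formula (Γ : Fin 2 → Fin 2 → Fin 2 → Pt2 → ℝ)
    (c : Fin 2 → Fin 2 → Fin 2 → ℝ)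
    (hΓ : ∀ k i j, Γ k i j = fun q : Pt2 => c k i j / q 0)
    (i j : Fin 2) (p : Pt2) (hp : p 0 ≠ 0) :
    ricciD Γ i j p =
      (-(c 0 i j) + (if i = 0 then c 0 0 j + c 1 1 j else 0)
        + ∑ k : Fin 2, ∑ l : Fin 2, (c k k l * c l i j - c k i l * c l k j)) / p 0 ^ 2 := by
  have hS : (fun q : Pt2 => ∑ k : Fin 2, Γ k k j q)
      = fun q : Pt2 => (c 0 0 j + c 1 1 j) / q 0 := by
    funext q
    rw [Fin.sum_univ_two, hΓ, hΓ, ← add_div]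
  rw [ricciD, hS, Fin.sum_univ_two, hΓ 0 i j, hΓ 1 i j,
    pd2_cdiv _ _ _ hp, pd2_cdiv _ _ _ hp, pd2_cdiv _ _ _ hp]
  simp only [Fin.sum_univ_two, hΓ]
  have h2 : (1 : Fin 2) ≠ 0 := by decide
  fin_cases i <;> simp only [Fin.zero_eta, Fin.mk_one, if_pos rfl, if_neg h2, reduceIte] <;> field_simp <;> ring


set_option maxHeartbeats 2000000 in
/-- For the class (ii) Type B connection with `r ≠ 0` and `b² = (3+t)r`,
the symmetrized Ricci tensor is
`ρ^{sym}_{11} = −(2/(x¹)²) b²/r`, `ρ^{sym}_{12} = ρ^{sym}_{21} = −(2/(x¹)²) b`,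
`ρ^{sym}_{22} = −(2/(x¹)²) r`. -/
theorem stmt12 (b r t : ℝ) (hr : r ≠ 0) (hdeg : b ^ 2 = (3 + t) * r) :
    ∀ x : Pt2, 0 < x 0 →
      ricciDSym (ΓB2 b r t) 0 0 x = -(2 / (x 0) ^ 2) * (b ^ 2 / r) ∧
      ricciDSym (ΓB2 b r t) 0 1 x = -(2 / (x 0) ^ 2) * b ∧
      ricciDSym (ΓB2 b r t) 1 0 x = -(2 / (x 0) ^ 2) * b ∧
      ricciDSym (ΓB2 b r t) 1 1 x = -(2 / (x 0) ^ 2) * r := by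
  intro x hx
  have hx0 : x 0 ≠ 0 := ne_of_gt hx
  have ht : t = b ^ 2 / r - 3 := by field_simp; linear_combination -hdeg
  rw [ht]
  set c : Fin 2 → Fin 2 → Fin 2 → ℝ := fun k i j =>
    if k = 0 ∧ i = 0 ∧ j = 0 then b ^ 2 / r - 3
    else if k = 0 ∧ ((i = 0 ∧ j = 1) ∨ (i = 1 ∧ j = 0)) then b
    else if k = 0 ∧ i = 1 ∧ j = 1 then r
    else if k = 1 ∧ i = 0 ∧ j = 0 then -(b ^ 3 / r ^ 2) - b / r
    else if k = 1 ∧ ((i = 0 ∧ j = 1) ∨ (i = 1 ∧ j = 0)) then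
      (1 / 2) * ((b ^ 2 / r - 3) - 1 - 3 * b ^ 2 / r)
    else if k = 1 ∧ i = 1 ∧ j = 1 then -b
    else 0 with hc
  have hΓ : ∀ k i j, ΓB2 b r (b ^ 2 / r - 3) k i j = fun q : Pt2 => c k i j / q 0 := by
    intro k i j; funext q
    fin_cases k <;> fin_cases i <;> fin_cases j <;> simp [ΓB2, hc]
  have R := fun i j => ricciD_formula (ΓB2 b r (b ^ 2 / r - 3)) c hΓ i j x hx0
  refine ⟨?_, ?_, ?_, ?_⟩ <;>
  · simp only [ricciDSym, R, hc, Fin.sum_univ_two]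
    norm_num
    field_simp
    ring


end
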